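/- Let a, b, c, d, e ∈ ℚ and g(z) = z^6 + az^4 + bz^3 + cz^2 + dz + e. For rational s, u, set p = 2s, q = (a + 2s^2 + 12u)/6, r = (3b - 2as - s^3 + 12su)/18. Then (3T^3 + pT^2 + qT + r)^2 - (2T^2 + sT + u)^3 - g(T), as a polynomial in T, has degree at most 2, and its coefficient of T^2 equals -c + q^2 + 2pr - 3s^2u - 6u^2. -/

import Mathlib

open Polynomial

theorem stmt_14 (a b c d e s u p q r : ℚ)
    (hp : p = 2*s) (hq : q = (a + 2*s^2 + 12*u)/6)
    (hr : r = (3*b - 2*a*s - s^3 + 12*s*u)/18) :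
    ((C 3 * X^3 + C p * X^2 + C q * X + C r)^2
      - (C 2 * X^2 + C s * X + C u)^3
      - (X^6 + C a * X^4 + C b * X^3 + C c * X^2 + C d * X + C e) : ℚ[X]).degree ≤ 2
    ∧ ((C 3 * X^3 + C p * X^2 + C q * X + C r)^2
      - (C 2 * X^2 + C s * X + C u)^3
      - (X^6 + C a * X^4 + C b * X^3 + C c * X^2 + C d * X + C e) : ℚ[X]).coeff 2
      = -c + q^2 + 2*p*r - 3*s^2*u - 6*u^2 := by
  have h6 : (6:ℚ)*q = a + 2*s^2 + 12*u := by rw [hq]; ring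
  have h18 : (18:ℚ)*r = 3*b - 2*a*s - s^3 + 12*s*u := by rw [hr]; ring
  have hCp : (C p : ℚ[X]) = 2 * C s := by
    have := congrArg (C : ℚ →+* ℚ[X]) hp
    simpa [map_ofNat] using this
  have hCq : (6 : ℚ[X]) * C q = C a + 2 * C s^2 + 12 * C u := by
    have := congrArg (C : ℚ →+* ℚ[X]) h6
    simpa [map_ofNat] using this
  have hCr : (18 : ℚ[X]) * C r = 3 * C b - 2 * C a * C s - C s^3 + 12 * C s * C u := by
    have := congrArg (C : ℚ →+* ℚ[X]) h18
    simpa [map_ofNat, sub_eq_add_neg] using this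
  have key18 : (18 : ℚ[X]) * (((C 3 * X^3 + C p * X^2 + C q * X + C r)^2
      - (C 2 * X^2 + C s * X + C u)^3
      - (X^6 + C a * X^4 + C b * X^3 + C c * X^2 + C d * X + C e) : ℚ[X])
      - (C (-c + q^2 + 2*p*r - 3*s^2*u - 6*u^2) * X^2
        + C (2*q*r - d - 3*s*u^2) * X + C (r^2 - e - u^3))) = 0 := by
    simp only [map_add, map_sub, map_mul, map_pow, map_neg, map_ofNat]
    linear_combination (36*X^3*C q + 36*X^4*C s + 18*X^4*C p + 108*X^5) * hCp
      + ((12:ℚ[X])*X^3*C s + 18*X^4) * hCq + ((6:ℚ[X])*X^3) * hCr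
  have key : ((C 3 * X^3 + C p * X^2 + C q * X + C r)^2
      - (C 2 * X^2 + C s * X + C u)^3
      - (X^6 + C a * X^4 + C b * X^3 + C c * X^2 + C d * X + C e) : ℚ[X])
      = C (-c + q^2 + 2*p*r - 3*s^2*u - 6*u^2) * X^2
        + C (2*q*r - d - 3*s*u^2) * X + C (r^2 - e - u^3) := by
    have h := mul_eq_zero.mp key18
    rcases h with h | h
    · exact absurd h (by norm_num)
    · exact sub_eq_zero.mp h
  constructor
  · rw [key]
    compute_degree
  · rw [key]
    simp only [coeff_add, coeff_C_mul, coeff_X_pow, coeff_X, coeff_C]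
    norm_num
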